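/- If a graph G is 3-colorable, then the gadget graph G' (each vertex of G extended by a pendant triangle) has a partition of V(G') into independent sets of weight exactly (n+1)³, where n = |V(G)|; and if G is not 3-colorable, then every partition of V(G') into independent sets has weight strictly larger than (n+1)³. Hence G is 3-colorable if and only if G' has an independent-set partition of weight at most (n+1)³. -/

import Mathlib

/-- The gadget graph: `G` with a pendant triangle attached to every vertex. -/
def gadget {V : Type*} (G : SimpleGraph V) : SimpleGraph (V ⊕ V × Fin 2) where
  Adj x y :=
    match x, y with
    | .inl u, .inl v => G.Adj u v
    | .inl u, .inr (v, _) => u = v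
    | .inr (v, _), .inl u => u = v
    | .inr (v, i), .inr (w, j) => v = w ∧ i ≠ j
  symm := by
    constructor
    rintro (u | ⟨u, i⟩) (v | ⟨v, j⟩) h <;>
      simp_all [SimpleGraph.adj_comm, eq_comm, Ne, and_comm]
  loopless := by constructor; rintro (u | ⟨u, i⟩) h <;> simp_all

/-- A set of pairwise non-adjacent vertices. -/
def IsIndepSet {V : Type*} (G : SimpleGraph V) (s : Set V) : Prop :=
  s.Pairwise fun a b => ¬ G.Adj a b

/-- `P` is a partition of the vertex set of `G` into (nonempty) independent sets. -/
def IsIndepPartition {V : Type*} [DecidableEq V] (G : SimpleGraph V)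
    (P : Finset (Finset V)) : Prop :=
  (∀ I ∈ P, IsIndepSet G (I : Set V)) ∧ (∀ I ∈ P, I.Nonempty) ∧
    (∀ v : V, ∃! I, I ∈ P ∧ v ∈ I)

def gbase {V : Type*} : V ⊕ V × Fin 2 → V := Sum.elim id Prod.fst

def fcol {V : Type*} (c : V → Fin 3) : V ⊕ V × Fin 2 → Fin 3
  | .inl v => c v
  | .inr (v, i) => c v + i.succ

def gsel {V : Type*} (c : V → Fin 3) (k : Fin 3) (v : V) : V ⊕ V × Fin 2 :=
  if c v = k then .inl v
  else if c v + (0 : Fin 2).succ = k then .inr (v, 0)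
  else .inr (v, 1)

lemma fact1 : ∀ k : Fin 3, ∀ i : Fin 2, k + i.succ ≠ k := by decide
lemma fact2 : ∀ k : Fin 3, ∀ i j : Fin 2, k + i.succ = k + j.succ → i = j := by decide
lemma fact3 : ∀ m k : Fin 3, m ≠ k → m + (0 : Fin 2).succ ≠ k → m + (1 : Fin 2).succ = k := by
  decide

lemma fcol_gsel {V : Type*} (c : V → Fin 3) (k : Fin 3) (v : V) : fcol c (gsel c k v) = k := by
  unfold gsel
  split_ifs with h1 h2
  · exact h1
  · exact h2
  · exact fact3 _ _ h1 h2

lemma gbase_gsel {V : Type*} (c : V → Fin 3) (k : Fin 3) (v : V) : gbase (gsel c k v) = v := by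
  unfold gsel
  split_ifs <;> rfl

lemma gsel_gbase {V : Type*} (c : V → Fin 3) (k : Fin 3) (x : V ⊕ V × Fin 2)
    (hx : fcol c x = k) : gsel c k (gbase x) = x := by
  rcases x with v | ⟨v, i⟩
  · have : c v = k := hx
    simp [gsel, gbase, this]
  · have e0 : (Fin.succ (0 : Fin 2)) = (1 : Fin 3) := by decide
    fin_cases i
    · have h : c v + (0 : Fin 2).succ = k := hx
      have h1 : ¬ c v = k := fun hc => fact1 k 0 (hc ▸ h)
      simp [gsel, gbase, h1, e0 ▸ h]
    · have h : c v + (1 : Fin 2).succ = k := hx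
      have h1 : ¬ c v = k := fun hc => fact1 k 1 (hc ▸ h)
      have h2 : ¬ c v + (0 : Fin 2).succ = k := fun hc => by
        have := fact2 (c v) 0 1 (hc.trans h.symm)
        exact absurd this (by decide)
      simp [gsel, gbase, h1, e0 ▸ h2]

lemma gadget_adj_of_base_eq {V : Type*} (G : SimpleGraph V) {x y : V ⊕ V × Fin 2}
    (hne : x ≠ y) (hb : gbase x = gbase y) : (gadget G).Adj x y := by
  rcases x with u | ⟨u, i⟩ <;> rcases y with v | ⟨v, j⟩ <;>
    simp only [gbase, Sum.elim_inl, Sum.elim_inr, id] at hb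
  · exact absurd (by rw [hb]) hne
  · exact hb
  · exact hb.symm
  · exact ⟨hb, fun h => hne (by rw [hb, h])⟩

lemma card_le_of_indep {V : Type*} [Fintype V] [DecidableEq V] (G : SimpleGraph V)
    (I : Finset (V ⊕ V × Fin 2)) (hI : IsIndepSet (gadget G) (I : Set (V ⊕ V × Fin 2))) :
    I.card ≤ Fintype.card V := by
  rw [← Finset.card_univ]
  apply Finset.card_le_card_of_injOn gbase (fun x _ => Finset.mem_univ _)
  intro x hx y hy hxy
  by_contra hne
  exact hI hx hy hne (gadget_adj_of_base_eq G hne hxy)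

lemma sum_card_partition {V : Type*} [Fintype V] [DecidableEq V]
    (P : Finset (Finset V)) (hP : ∀ v : V, ∃! I, I ∈ P ∧ v ∈ I) :
    ∑ I ∈ P, I.card = Fintype.card V := by
  have h1 : ∀ I : Finset V, I.card = ∑ v : V, if v ∈ I then 1 else 0 := by
    intro I
    rw [Finset.sum_ite_mem, Finset.univ_inter, Finset.card_eq_sum_ones]
  simp_rw [h1]
  rw [Finset.sum_comm]
  rw [← Finset.card_univ, Finset.card_eq_sum_ones]
  apply Finset.sum_congr rfl
  intro v _
  obtain ⟨I₀, ⟨hI₀P, hvI₀⟩, huniq⟩ := hP v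
  rw [← Finset.card_filter]
  have heq : P.filter (v ∈ ·) = {I₀} := by
    ext J
    simp only [Finset.mem_filter, Finset.mem_singleton]
    constructor
    · rintro ⟨hJP, hvJ⟩; exact huniq J ⟨hJP, hvJ⟩
    · rintro rfl; exact ⟨hI₀P, hvI₀⟩
  rw [heq, Finset.card_singleton]

lemma colorable_of_card_le_three {V : Type*} [Fintype V] [DecidableEq V] (G : SimpleGraph V)
    (P : Finset (Finset (V ⊕ V × Fin 2))) (hP : IsIndepPartition (gadget G) P)
    (h3 : P.card ≤ 3) : G.Colorable 3 := by
  classical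
  obtain ⟨hind, hne, hpart⟩ := hP
  have hcard : Fintype.card {I // I ∈ P} ≤ Fintype.card (Fin 3) := by
    simpa using h3
  obtain ⟨emb⟩ := Function.Embedding.nonempty_iff_card_le.mpr hcard
  have hpart' : ∀ v : V, ∃ I, I ∈ P ∧ (Sum.inl v : V ⊕ V × Fin 2) ∈ I :=
    fun v => (hpart (Sum.inl v)).exists
  choose pf hpfP hpfmem using hpart'
  refine ⟨SimpleGraph.Coloring.mk (fun v => emb ⟨pf v, hpfP v⟩) ?_⟩
  intro u v huv heq
  have hIJ : pf u = pf v := by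
    exact congrArg Subtype.val (emb.injective heq)
  have hadj : (gadget G).Adj (Sum.inl u) (Sum.inl v) := huv
  have hne' : (Sum.inl u : V ⊕ V × Fin 2) ≠ Sum.inl v := by
    simp only [ne_eq, Sum.inl.injEq]
    exact G.ne_of_adj huv
  exact hind (pf u) (hpfP u) (hpfmem u) (hIJ ▸ hpfmem v) hne' hadj

section Main
variable {V : Type*} [Fintype V] [DecidableEq V] (G : SimpleGraph V)


lemma key_ineq {n a b : ℕ} (ha : a ≤ n) (hb : b ≤ n) (hab : n < a + b) :
    (n + 1) * (a + b - n + 1) ≤ (a + 1) * (b + 1) := by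
  obtain ⟨d, hd⟩ : ∃ d, a + b = n + d := ⟨a + b - n, by omega⟩
  have h1 : a + b - n = d := by omega
  rw [h1]
  zify
  nlinarith [mul_nonneg (by omega : (0:ℤ) ≤ (n:ℤ) - a) (by omega : (0:ℤ) ≤ (n:ℤ) - b)]

lemma key_ineq_strict {n a b : ℕ} (ha : a < n) (hb : b < n) (hab : n < a + b) :
    (n + 1) * (a + b - n + 1) < (a + 1) * (b + 1) := by
  obtain ⟨d, hd⟩ : ∃ d, a + b = n + d := ⟨a + b - n, by omega⟩
  have h1 : a + b - n = d := by omega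
  rw [h1]
  zify
  nlinarith [mul_pos (by omega : (0:ℤ) < (n:ℤ) - a) (by omega : (0:ℤ) < (n:ℤ) - b)]

lemma prod_map_pos (s : Multiset ℕ) : 0 < (s.map (· + 1)).prod :=
  Multiset.prod_pos (fun a ha => by
    obtain ⟨b, _, rfl⟩ := Multiset.mem_map.mp ha; omega)

lemma main_ge (n : ℕ) :
    ∀ q k (s : Multiset ℕ), Multiset.card s ≤ k → (∀ a ∈ s, a ≤ n) → q * n ≤ s.sum →
    (n + 1) ^ q ≤ (s.map (· + 1)).prod := by
  intro q
  induction q with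
  | zero =>
    intro k s _ _ _
    simp only [pow_zero]
    exact prod_map_pos s
  | succ q ihq =>
    intro k
    induction k with
    | zero =>
      intro s hcard hle hsum
      have h0 : s = 0 := Multiset.card_eq_zero.mp (Nat.le_zero.mp hcard)
      subst h0
      simp only [Multiset.sum_zero, Nat.le_zero, Nat.mul_eq_zero] at hsum
      rcases hsum with h | h
      · omega
      · subst h; simp
    | succ k ihk =>
      intro s hcard hle hsum
      rw [Nat.succ_mul] at hsum
      rcases Nat.eq_zero_or_pos n with hn | hn
      · subst hn
        simp only [Nat.zero_add, one_pow]
        exact prod_map_pos s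
      -- s is nonempty
      have hs0 : s ≠ 0 := by
        intro h; rw [h] at hsum; simp at hsum; omega
      by_cases hex : ∃ a ∈ s, a = n
      · obtain ⟨a, has, han⟩ := hex
        rw [han] at has
        obtain ⟨r, rfl⟩ : ∃ r, s = n ::ₘ r := ⟨s.erase n, (Multiset.cons_erase has).symm⟩
        simp only [Multiset.sum_cons] at hsum
        have h2 := ihq (Multiset.card r) r le_rfl (fun x hx => hle x (by simp [hx])) (by omega)
        rw [Multiset.map_cons, Multiset.prod_cons]
        calc (n+1)^(q+1) = (n+1) * (n+1)^q := by ring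
          _ ≤ (n+1) * (r.map (· + 1)).prod := Nat.mul_le_mul_left _ h2
      · push_neg at hex
        have hltn : ∀ a ∈ s, a < n := fun a ha => lt_of_le_of_ne (hle a ha) (hex a ha)
        obtain ⟨a, has⟩ := Multiset.exists_mem_of_ne_zero hs0
        obtain ⟨r, rfl⟩ : ∃ r, s = a ::ₘ r := ⟨s.erase a, (Multiset.cons_erase has).symm⟩
        have hr0 : r ≠ 0 := by
          intro h
          subst h
          simp only [Multiset.sum_cons, Multiset.sum_zero] at hsum
          have := hltn a (by simp)
          omega
        obtain ⟨b, hbr⟩ := Multiset.exists_mem_of_ne_zero hr0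
        obtain ⟨r', rfl⟩ : ∃ r', r = b ::ₘ r' := ⟨r.erase b, (Multiset.cons_erase hbr).symm⟩
        simp only [Multiset.map_cons, Multiset.prod_cons, Multiset.sum_cons,
          Multiset.card_cons] at hsum hcard ⊢
        have han : a ≤ n := hle a (by simp)
        have hbn : b ≤ n := hle b (by simp)
        by_cases hab : a + b ≤ n
        · have h2 := ihk ((a + b) ::ₘ r') (by simp only [Multiset.card_cons]; omega)
            (by rintro x hx; rcases Multiset.mem_cons.mp hx with rfl | hx
                · exact hab
                · exact hle x (by simp [hx]))
            (by rw [Nat.succ_mul]; simp only [Multiset.sum_cons]; omega)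
          simp only [Multiset.map_cons, Multiset.prod_cons] at h2
          calc (n+1)^(q+1) ≤ (a + b + 1) * (r'.map (· + 1)).prod := h2
            _ ≤ ((a+1) * (b+1)) * (r'.map (· + 1)).prod := by
                apply Nat.mul_le_mul_right; nlinarith
            _ = (a+1) * ((b+1) * (r'.map (· + 1)).prod) := by ring
        · push_neg at hab
          have h2 := ihq (k+1) ((a + b - n) ::ₘ r') (by simp only [Multiset.card_cons]; omega)
            (by rintro x hx; rcases Multiset.mem_cons.mp hx with rfl | hx
                · omega
                · exact hle x (by simp [hx]))
            (by simp only [Multiset.sum_cons]; omega)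
          simp only [Multiset.map_cons, Multiset.prod_cons] at h2
          calc (n+1)^(q+1) = (n+1) * (n+1)^q := by ring
            _ ≤ (n+1) * ((a + b - n + 1) * (r'.map (· + 1)).prod) :=
                Nat.mul_le_mul_left _ h2
            _ = ((n+1) * (a + b - n + 1)) * (r'.map (· + 1)).prod := by ring
            _ ≤ ((a+1) * (b+1)) * (r'.map (· + 1)).prod :=
                Nat.mul_le_mul_right _ (key_ineq han hbn hab)
            _ = (a+1) * ((b+1) * (r'.map (· + 1)).prod) := by ring

lemma main_gt (n : ℕ) (hn : 1 ≤ n) (s : Multiset ℕ) (h1 : ∀ a ∈ s, 1 ≤ a)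
    (hle : ∀ a ∈ s, a ≤ n) (hsum : s.sum = 3 * n) (hcard : Multiset.card s ≠ 3) :
    (n + 1) ^ 3 < (s.map (· + 1)).prod := by
  -- the number of parts is at least 4
  have hcle : s.sum ≤ Multiset.card s • n := Multiset.sum_le_card_nsmul s n hle
  rw [smul_eq_mul] at hcle
  have hc4 : 4 ≤ Multiset.card s := by
    by_contra h
    push_neg at h
    interval_cases h : Multiset.card s <;> omega
  -- there are at least two elements < n
  set t := s.filter (fun a => a < n) with ht
  set u := s.filter (fun a => ¬ a < n) with hu
  have htu : t + u = s := Multiset.filter_add_not _ s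
  have husum : u.sum = Multiset.card u * n := by
    have : u = Multiset.replicate (Multiset.card u) n := by
      rw [Multiset.eq_replicate_card]
      intro x hx
      have hx' := Multiset.mem_filter.mp hx
      have := hle x hx'.1
      omega
    rw [this, Multiset.sum_replicate, smul_eq_mul, Multiset.card_replicate]
  have htsum1 : Multiset.card t ≤ t.sum := by
    have := Multiset.card_nsmul_le_sum (s := t) (a := 1)
      (fun x hx => h1 x (Multiset.mem_filter.mp hx).1)
    simpa using this
  have hcards : Multiset.card t + Multiset.card u = Multiset.card s := by
    rw [← htu, Multiset.card_add]
  have hsums : t.sum + u.sum = s.sum := by rw [← htu, Multiset.sum_add]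
  have ht2 : 2 ≤ Multiset.card t := by
    by_contra h
    push_neg at h
    have hu3 : 3 ≤ Multiset.card u := by omega
    rcases Nat.lt_or_ge (Multiset.card u) 4 with h4 | h4
    · -- card u = 3, card t ≥ 1
      have : Multiset.card u = 3 := by omega
      rw [this] at husum
      omega
    · have : 4 * n ≤ Multiset.card u * n := Nat.mul_le_mul_right n h4
      omega
  -- extract two elements < n
  have ht0 : t ≠ 0 := by
    intro h; rw [h] at ht2; simp at ht2
  obtain ⟨a, hat⟩ := Multiset.exists_mem_of_ne_zero ht0
  have hta0 : t.erase a ≠ 0 := by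
    intro h
    have := Multiset.card_erase_of_mem hat
    rw [h] at this
    simp at this
    omega
  obtain ⟨b, hbt⟩ := Multiset.exists_mem_of_ne_zero hta0
  have haltn : a < n := (Multiset.mem_filter.mp hat).2
  have hbltn : b < n := (Multiset.mem_filter.mp (Multiset.mem_of_le (Multiset.erase_le a t) hbt)).2
  have has : a ∈ s := (Multiset.mem_filter.mp hat).1
  have hbs : b ∈ s.erase a := by
    have h1' : t.erase a ≤ s.erase a :=
      Multiset.erase_le_erase a (Multiset.filter_le _ s)
    exact Multiset.mem_of_le h1' hbt
  obtain ⟨r, hr⟩ : ∃ r, s.erase a = b ::ₘ r := ⟨(s.erase a).erase b, (Multiset.cons_erase hbs).symm⟩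
  have hs' : s = a ::ₘ b ::ₘ r := by rw [← hr, Multiset.cons_erase has]
  subst hs'
  have ha1 : 1 ≤ a := h1 a (by simp)
  have hb1 : 1 ≤ b := h1 b (by simp)
  simp only [Multiset.sum_cons] at hsum
  have hrle : ∀ x ∈ r, x ≤ n := fun x hx => hle x (by simp [hx])
  simp only [Multiset.map_cons, Multiset.prod_cons]
  have hR : 0 < (r.map (· + 1)).prod := prod_map_pos r
  rw [← mul_assoc]
  by_cases hab : a + b ≤ n
  · have h2 := main_ge n 3 (Multiset.card ((a+b) ::ₘ r)) ((a + b) ::ₘ r) le_rfl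
      (by rintro x hx; rcases Multiset.mem_cons.mp hx with rfl | hx
          · exact hab
          · exact hrle x hx)
      (by simp only [Multiset.sum_cons]; omega)
    simp only [Multiset.map_cons, Multiset.prod_cons] at h2
    calc (n+1)^3 ≤ (a + b + 1) * (r.map (· + 1)).prod := h2
      _ < ((a+1) * (b+1)) * (r.map (· + 1)).prod := by
          apply Nat.mul_lt_mul_of_lt_of_le _ le_rfl hR
          nlinarith
  · push_neg at hab
    have h2 := main_ge n 3 (Multiset.card (n ::ₘ (a + b - n) ::ₘ r)) (n ::ₘ (a + b - n) ::ₘ r) le_rfl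
      (by rintro x hx
          rcases Multiset.mem_cons.mp hx with rfl | hx
          · exact le_rfl
          rcases Multiset.mem_cons.mp hx with rfl | hx
          · omega
          · exact hrle x hx)
      (by simp only [Multiset.sum_cons]; omega)
    simp only [Multiset.map_cons, Multiset.prod_cons] at h2
    calc (n+1)^3 ≤ (n + 1) * ((a + b - n + 1) * (r.map (· + 1)).prod) := h2
      _ = ((n + 1) * (a + b - n + 1)) * (r.map (· + 1)).prod := by ring
      _ < ((a+1) * (b+1)) * (r.map (· + 1)).prod :=
          Nat.mul_lt_mul_of_lt_of_le (key_ineq_strict haltn hbltn hab) le_rfl hR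

lemma construction (hcol : G.Colorable 3) [Nonempty V] :
    ∃ P : Finset (Finset (V ⊕ V × Fin 2)), IsIndepPartition (gadget G) P ∧
      ∏ I ∈ P, (I.card + 1) = (Fintype.card V + 1) ^ 3 := by
  classical
  obtain ⟨c⟩ := hcol
  set cf : V → Fin 3 := fun v => c v with hcf
  set fib : Fin 3 → Finset (V ⊕ V × Fin 2) :=
    fun k => Finset.univ.filter (fun x => fcol cf x = k) with hfib
  have hmemfib : ∀ k x, x ∈ fib k ↔ fcol cf x = k := by
    intro k x; simp [hfib]
  obtain ⟨v₀⟩ := ‹Nonempty V›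
  have hfibne : ∀ k, (fib k).Nonempty :=
    fun k => ⟨gsel cf k v₀, (hmemfib k _).mpr (fcol_gsel cf k v₀)⟩
  have hinj : ∀ k k' : Fin 3, fib k = fib k' → k = k' := by
    intro k k' h
    have h1 : gsel cf k v₀ ∈ fib k' := h ▸ (hmemfib k _).mpr (fcol_gsel cf k v₀)
    rw [hmemfib, fcol_gsel] at h1
    exact h1
  have hcardfib : ∀ k, (fib k).card = Fintype.card V := by
    intro k
    rw [← Finset.card_univ]
    apply Finset.card_bij' (fun x _ => gbase x) (fun v _ => gsel cf k v)
    · intro a _; exact Finset.mem_univ _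
    · intro v _; exact (hmemfib k _).mpr (fcol_gsel cf k v)
    · intro x hx; exact gsel_gbase cf k x ((hmemfib k x).mp hx)
    · intro v _; exact gbase_gsel cf k v
  refine ⟨Finset.univ.image fib, ⟨?_, ?_, ?_⟩, ?_⟩
  · -- independence
    rintro I hI
    obtain ⟨k, _, rfl⟩ := Finset.mem_image.mp hI
    intro x hx y hy hne hadj
    rw [Finset.mem_coe, hmemfib] at hx hy
    rcases x with u | ⟨u, i⟩ <;> rcases y with v | ⟨v, j⟩
    · have hadj' : G.Adj u v := hadj
      have hu : cf u = k := hx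
      have hv : cf v = k := hy
      exact c.valid hadj' (hu.trans hv.symm)
    · have huv : u = v := hadj
      subst huv
      have hu : cf u = k := hx
      have hv : cf u + j.succ = k := hy
      exact fact1 k j (by rw [← hu] at hv ⊢; exact hv)
    · have huv : v = u := hadj
      subst huv
      have hu : cf v + i.succ = k := hx
      have hv : cf v = k := hy
      exact fact1 k i (by rw [← hv] at hu ⊢; exact hu)
    · obtain ⟨huv, hij⟩ : u = v ∧ i ≠ j := hadj
      subst huv
      have hu : cf u + i.succ = k := hx
      have hv : cf u + j.succ = k := hy
      exact hij (fact2 (cf u) i j (hu.trans hv.symm))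
  · -- nonempty
    rintro I hI
    obtain ⟨k, _, rfl⟩ := Finset.mem_image.mp hI
    exact hfibne k
  · -- partition
    intro x
    refine ⟨fib (fcol cf x), ⟨Finset.mem_image_of_mem fib (Finset.mem_univ _),
      (hmemfib _ _).mpr rfl⟩, ?_⟩
    rintro J ⟨hJP, hxJ⟩
    obtain ⟨k, _, rfl⟩ := Finset.mem_image.mp hJP
    rw [hmemfib] at hxJ
    rw [hxJ]
  · -- product
    rw [Finset.prod_image (fun k _ k' _ h => hinj k k' h)]
    simp only [hcardfib]
    rw [Finset.prod_const, Finset.card_univ, Fintype.card_fin]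
end Main

theorem stmt_10 {V : Type*} [Fintype V] [DecidableEq V] (G : SimpleGraph V)
    (n : ℕ) (hn : n = Fintype.card V) :
    (G.Colorable 3 →
      ∃ P : Finset (Finset (V ⊕ V × Fin 2)), IsIndepPartition (gadget G) P ∧
        ∏ I ∈ P, (I.card + 1) = (n + 1) ^ 3) ∧
    (¬ G.Colorable 3 →
      ∀ P : Finset (Finset (V ⊕ V × Fin 2)), IsIndepPartition (gadget G) P →
        (n + 1) ^ 3 < ∏ I ∈ P, (I.card + 1)) ∧
    (G.Colorable 3 ↔
      ∃ P : Finset (Finset (V ⊕ V × Fin 2)), IsIndepPartition (gadget G) P ∧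
        ∏ I ∈ P, (I.card + 1) ≤ (n + 1) ^ 3) := by
  classical
  have part1 : G.Colorable 3 →
      ∃ P : Finset (Finset (V ⊕ V × Fin 2)), IsIndepPartition (gadget G) P ∧
        ∏ I ∈ P, (I.card + 1) = (n + 1) ^ 3 := by
    intro hcol
    rcases isEmpty_or_nonempty V with hV | hV
    · refine ⟨∅, ⟨fun I hI => absurd hI (Finset.notMem_empty I),
        fun I hI => absurd hI (Finset.notMem_empty I),
        fun x => by rcases x with v | ⟨v, i⟩ <;> exact isEmptyElim v⟩, ?_⟩
      have h0 : n = 0 := by rw [hn, Fintype.card_eq_zero]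
      simp [h0]
    · rw [hn]
      exact construction G hcol
  have part2 : ¬ G.Colorable 3 →
      ∀ P : Finset (Finset (V ⊕ V × Fin 2)), IsIndepPartition (gadget G) P →
        (n + 1) ^ 3 < ∏ I ∈ P, (I.card + 1) := by
    intro hncol P hP
    obtain ⟨hind, hnonempty, hpart⟩ := hP
    have hn1 : 1 ≤ n := by
      rcases Nat.eq_zero_or_pos n with h0 | h
      · exfalso
        have : IsEmpty V := by
          rw [← Fintype.card_eq_zero_iff, ← hn, h0]
        exact hncol ⟨SimpleGraph.Coloring.mk (fun v => isEmptyElim v)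
          (fun {u v} _ => isEmptyElim u)⟩
      · exact h
    set s : Multiset ℕ := P.val.map Finset.card with hs
    have h1 : ∀ a ∈ s, 1 ≤ a := by
      intro a ha
      obtain ⟨I, hI, rfl⟩ := Multiset.mem_map.mp ha
      exact Finset.card_pos.mpr (hnonempty I hI)
    have hle : ∀ a ∈ s, a ≤ n := by
      intro a ha
      obtain ⟨I, hI, rfl⟩ := Multiset.mem_map.mp ha
      rw [hn]
      exact card_le_of_indep G I (hind I hI)
    have hsum : s.sum = 3 * n := by
      have := sum_card_partition P hpart
      have hcard3 : Fintype.card (V ⊕ V × Fin 2) = 3 * n := by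
        simp [Fintype.card_sum, Fintype.card_prod, ← hn]
        ring
      rw [hcard3] at this
      exact this
    have hcardne : Multiset.card s ≠ 3 := by
      intro h3
      rw [hs, Multiset.card_map] at h3
      exact hncol (colorable_of_card_le_three G P ⟨hind, hnonempty, hpart⟩ (le_of_eq h3))
    have := main_gt n hn1 s h1 hle hsum hcardne
    have heq : (s.map (· + 1)).prod = ∏ I ∈ P, (I.card + 1) := by
      rw [hs, Multiset.map_map]
      rfl
    rwa [heq] at this
  refine ⟨part1, part2, ?_, ?_⟩
  · intro h
    obtain ⟨P, hP, heq⟩ := part1 h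
    exact ⟨P, hP, le_of_eq heq⟩
  · rintro ⟨P, hP, hle⟩
    by_contra hncol
    exact absurd hle (not_le.mpr (part2 hncol P hP))
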